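/- A monomial ideal I in S = K[x_1,...,x_n] satisfies (I : x_j^∞) = (I : (x_1,...,x_j)^∞) for all j = 1,...,n if and only if for every monomial u ∈ I and all indices 1 ≤ j < i ≤ n with x_i dividing u, there exists an integer t > 0 such that x_j^t · u / x_i^{ν_i(u)} ∈ I, where ν_i(u) is the exponent of x_i in u. -/

import Mathlib

/-! Monomials in `S = K[x_1,…,x_n]` are identified with their exponent vectors in
`Fin n →₀ ℕ` (0-indexed: the variable `x_j` of the paper is index `j-1`).
A monomial ideal is identified with its set `M` of exponent vectors of monomials. -/

/-- `M` is the set of exponent vectors of the monomials of a monomial ideal: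
it is closed under multiplication by arbitrary monomials. -/
def MonIdeal {n : ℕ} (M : Set (Fin n →₀ ℕ)) : Prop :=
  ∀ u ∈ M, ∀ v : Fin n →₀ ℕ, u + v ∈ M

/-- The Borel type condition: for every monomial `u ∈ I` and `j < i` with `x_i ∣ u`
there is `t > 0` with `x_j^t · u / x_i^{ν_i(u)} ∈ I`. -/
def BorelProp {n : ℕ} (M : Set (Fin n →₀ ℕ)) : Prop :=
  ∀ u ∈ M, ∀ i j : Fin n, j < i → u i ≠ 0 →
    ∃ t : ℕ, 0 < t ∧ Finsupp.single j t + Finsupp.update u i 0 ∈ M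

/-- `i = m(u)`, the largest index of a variable dividing the monomial `u`. -/
def IsMaxVar {n : ℕ} (u : Fin n →₀ ℕ) (i : Fin n) : Prop :=
  u i ≠ 0 ∧ ∀ k : Fin n, i < k → u k = 0

/-- `M` is stable: for every monomial `u ∈ M` and `j < m(u)`, `x_j · u / x_{m(u)} ∈ M`. -/
def StableProp {n : ℕ} (M : Set (Fin n →₀ ℕ)) : Prop :=
  ∀ u ∈ M, ∀ i : Fin n, IsMaxVar u i → ∀ j : Fin n, j < i →
    Finsupp.single j 1 + Finsupp.update u i (u i - 1) ∈ M

/-- degree of a monomial. -/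
def mdeg {n : ℕ} (u : Fin n →₀ ℕ) : ℕ := ∑ k : Fin n, u k

/-- `u` is a minimal monomial generator of `M` (divisibility of monomials is `≤`
of exponent vectors). -/
def MinGen {n : ℕ} (M : Set (Fin n →₀ ℕ)) (u : Fin n →₀ ℕ) : Prop :=
  u ∈ M ∧ ∀ v ∈ M, v ≤ u → v = u

/-- `deg(I)`: the maximal degree of a minimal monomial generator. -/
noncomputable def idealDeg {n : ℕ} (M : Set (Fin n →₀ ℕ)) : ℕ :=
  sSup {d | ∃ u, MinGen M u ∧ mdeg u = d}

/-- `I_{≥ e}`: the ideal generated by all monomials of `I` of degree `≥ e`. -/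
def geSet {n : ℕ} (M : Set (Fin n →₀ ℕ)) (e : ℕ) : Set (Fin n →₀ ℕ) :=
  {w | ∃ u ∈ M, e ≤ mdeg u ∧ u ≤ w}

/-- the product of two monomial ideals (on the level of monomials). -/
def prodSet {n : ℕ} (M N : Set (Fin n →₀ ℕ)) : Set (Fin n →₀ ℕ) :=
  {w | ∃ u ∈ M, ∃ v ∈ N, w = u + v}

/-- The Castelnuovo–Mumford regularity of a monomial ideal of Borel type: by
[Cimpoeas, Cor. 8] / Theorem 1.5, `reg(I) = min { e ≥ deg I : I_{≥e} is stable }`. -/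
noncomputable def regSet {n : ℕ} (M : Set (Fin n →₀ ℕ)) : ℕ :=
  sInf {e | idealDeg M ≤ e ∧ StableProp (geSet M e)}

/-- `q` (0-indexed) is the largest index with `x_q ∈ √I`. -/
def IsQ {n : ℕ} (M : Set (Fin n →₀ ℕ)) (q : Fin n) : Prop :=
  (∃ k : ℕ, 0 < k ∧ Finsupp.single q k ∈ M) ∧
    ∀ j : Fin n, (∃ k : ℕ, 0 < k ∧ Finsupp.single j k ∈ M) → j ≤ q



open MvPolynomial

section Aux0
variable {K : Type*} [Field K] {n : ℕ} {M : Set (Fin n →₀ ℕ)}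

private lemma memI_iff {w : Fin n →₀ ℕ} :
    monomial w (1 : K) ∈ Ideal.span ((fun u => monomial u (1 : K)) '' M) ↔ ∃ s ∈ M, s ≤ w := by
  rw [mem_ideal_span_monomial_image]
  constructor
  · intro h
    exact h w (by simp [support_monomial])
  · intro h xi hxi
    classical
    rw [support_monomial, if_neg one_ne_zero, Finset.mem_singleton] at hxi
    subst hxi; exact h

private lemma mem_mono {v w : Fin n →₀ ℕ}
    (h : monomial v (1 : K) ∈ Ideal.span ((fun u => monomial u (1 : K)) '' M))
    (hvw : v ≤ w) : monomial w (1 : K) ∈ Ideal.span ((fun u => monomial u (1 : K)) '' M) := by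
  rw [memI_iff] at h ⊢
  obtain ⟨s, hs, hsv⟩ := h
  exact ⟨s, hs, hsv.trans hvw⟩

private lemma mulmem_iff {b : Fin n →₀ ℕ} {g : MvPolynomial (Fin n) K} :
    monomial b (1 : K) * g ∈ Ideal.span ((fun u => monomial u (1 : K)) '' M) ↔
      ∀ w ∈ g.support,
        monomial (b + w) (1 : K) ∈ Ideal.span ((fun u => monomial u (1 : K)) '' M) := by
  classical
  constructor
  · intro h w hw
    rw [mem_ideal_span_monomial_image] at h
    rw [memI_iff]
    refine h (b + w) ?_
    rw [mem_support_iff, coeff_monomial_mul, one_mul]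
    exact mem_support_iff.mp hw
  · intro h
    rw [mem_ideal_span_monomial_image]
    intro xi hxi
    have h2 := MvPolynomial.support_mul (monomial b (1 : K)) g hxi
    rw [Finset.mem_add] at h2
    obtain ⟨y, hy, w, hw, hyw⟩ := h2
    rw [support_monomial, if_neg one_ne_zero, Finset.mem_singleton] at hy
    subst hy; subst hyw
    exact memI_iff.mp (h w hw)

private lemma single_add_update {u : Fin n →₀ ℕ} {i : Fin n} :
    Finsupp.single i (u i) + Finsupp.update u i 0 = u := by
  ext l
  rcases eq_or_ne l i with rfl | hne
  · simp
  · simp [Finsupp.single_eq_of_ne hne, Finsupp.coe_update, Function.update_of_ne hne]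

private lemma sum_single (i : Fin n) (c : ℕ) : ∑ k : Fin n, Finsupp.single i c k = c := by
  rw [Finset.sum_eq_single i]
  · simp
  · intro b _ hb; exact Finsupp.single_eq_of_ne hb
  · intro h; exact absurd (Finset.mem_univ i) h

end Aux0

open MvPolynomial in
/-- a monomial ideal `I` satisfies `(I : x_j^∞) = (I : (x_1,…,x_j)^∞)`
for all `j` iff for every monomial `u ∈ I` and `j < i` with `x_i ∣ u` there is `t > 0`
with `x_j^t u / x_i^{ν_i(u)} ∈ I`. -/
theorem statement0 {K : Type*} [Field K] {n : ℕ} (hn : 2 ≤ n)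
    (I : Ideal (MvPolynomial (Fin n) K))
    (hI : ∃ M : Set (Fin n →₀ ℕ),
      I = Ideal.span ((fun u => monomial u (1 : K)) '' M)) :
    (∀ j : Fin n,
        {g | ∃ k : ℕ, (X j : MvPolynomial (Fin n) K) ^ k * g ∈ I} =
        {g | ∃ k : ℕ, ∀ h ∈ (Ideal.span {p | ∃ i : Fin n, i ≤ j ∧ p = (X i : MvPolynomial (Fin n) K)}) ^ k,
              h * g ∈ I}) ↔
    (∀ u : Fin n →₀ ℕ, monomial u (1 : K) ∈ I → ∀ i j : Fin n, j < i → u i ≠ 0 →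
        ∃ t : ℕ, 0 < t ∧
          monomial (Finsupp.single j t + Finsupp.update u i 0) (1 : K) ∈ I) := by
  obtain ⟨M, hM⟩ := hI
  subst hM
  constructor
  · -- saturation condition ⇒ Borel condition
    intro h u hu i j hji hui
    have hmem : monomial (Finsupp.update u i 0) (1 : K) ∈
        {g | ∃ k : ℕ, (X i : MvPolynomial (Fin n) K) ^ k * g ∈
          Ideal.span ((fun u => monomial u (1 : K)) '' M)} := by
      refine ⟨u i, ?_⟩
      rw [X_pow_eq_monomial, monomial_mul, one_mul, single_add_update]
      exact hu
    rw [h i] at hmem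
    obtain ⟨k, hk⟩ := hmem
    have hXj : (X j : MvPolynomial (Fin n) K) ^ k ∈
        (Ideal.span {p | ∃ i' : Fin n, i' ≤ i ∧ p = (X i' : MvPolynomial (Fin n) K)}) ^ k :=
      Ideal.pow_mem_pow (Ideal.subset_span (by exact ⟨j, hji.le, rfl⟩)) k
    have h1 := hk _ hXj
    refine ⟨k + 1, Nat.succ_pos k, ?_⟩
    have h2 : (X j : MvPolynomial (Fin n) K) *
        ((X j) ^ k * monomial (Finsupp.update u i 0) 1) ∈
        Ideal.span ((fun u => monomial u (1 : K)) '' M) :=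
      Ideal.mul_mem_left _ _ h1
    rw [← mul_assoc, ← pow_succ'] at h2
    rwa [X_pow_eq_monomial, monomial_mul, one_mul] at h2
  · -- Borel condition ⇒ saturation condition
    intro hB j
    ext g
    simp only [Set.mem_setOf_eq]
    constructor
    · rintro ⟨k, hk⟩
      rw [X_pow_eq_monomial] at hk
      have step1 := mulmem_iff.mp hk
      have step2 : ∀ (i : Fin n) (w : Fin n →₀ ℕ), ∃ Kw : ℕ, i ≤ j → w ∈ g.support →
          monomial (Finsupp.single i Kw + w) (1 : K) ∈
            Ideal.span ((fun u => monomial u (1 : K)) '' M) := by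
        intro i w
        by_cases hij : i ≤ j
        · by_cases hw : w ∈ g.support
          · rcases eq_or_lt_of_le hij with rfl | hlt
            · exact ⟨k, fun _ _ => step1 w hw⟩
            · rcases Nat.eq_zero_or_pos k with rfl | hk0
              · refine ⟨0, fun _ _ => ?_⟩
                have h0 := step1 w hw
                rw [Finsupp.single_zero, zero_add] at h0 ⊢
                exact h0
              · have huj : (Finsupp.single j k + w) j ≠ 0 := by
                  simp only [Finsupp.add_apply, Finsupp.single_eq_same]
                  omega
                obtain ⟨t, ht, htm⟩ := hB _ (step1 w hw) j i hlt huj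
                refine ⟨t, fun _ _ => ?_⟩
                refine mem_mono htm (add_le_add le_rfl ?_)
                intro l
                rcases eq_or_ne l j with rfl | hne
                · simp
                · simp [Finsupp.coe_update, Function.update_of_ne hne,
                    Finsupp.single_eq_of_ne hne]
          · exact ⟨0, fun _ hw' => absurd hw' hw⟩
        · exact ⟨0, fun hij' _ => absurd hij' hij⟩
      choose F hF using step2
      set KS := Finset.univ.sup (fun i : Fin n => g.support.sup (F i)) with hKSdef
      have step3 : ∀ i : Fin n, i ≤ j → ∀ w ∈ g.support,
          monomial (Finsupp.single i KS + w) (1 : K) ∈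
            Ideal.span ((fun u => monomial u (1 : K)) '' M) := by
        intro i hij w hw
        refine mem_mono (hF i w hij hw) (add_le_add ?_ le_rfl)
        have hle : F i w ≤ KS :=
          le_trans (Finset.le_sup hw) (Finset.le_sup (f := fun i : Fin n => g.support.sup (F i)) (Finset.mem_univ i))
        intro l
        rcases eq_or_ne l i with rfl | hne
        · simpa using hle
        · simp [Finsupp.single_eq_of_ne hne]
      refine ⟨n * KS + 1, ?_⟩
      have claim : ∀ m : ℕ,
          (Ideal.span {p | ∃ i : Fin n, i ≤ j ∧ p = (X i : MvPolynomial (Fin n) K)}) ^ m ≤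
          Ideal.span ((fun a => monomial a (1 : K)) ''
            {a : Fin n →₀ ℕ | (∀ l ∈ a.support, l ≤ j) ∧ ∑ l : Fin n, a l = m}) := by
        intro m
        induction m with
        | zero =>
          rw [pow_zero, Ideal.one_eq_top]
          have h1 : (1 : MvPolynomial (Fin n) K) ∈
              Ideal.span ((fun a => monomial a (1 : K)) ''
                {a : Fin n →₀ ℕ | (∀ l ∈ a.support, l ≤ j) ∧ ∑ l : Fin n, a l = 0}) := by
            refine Ideal.subset_span ?_
            exact ⟨0, ⟨by simp, by simp⟩, by simp [monomial_zero']⟩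
          exact ((Ideal.eq_top_iff_one _).2 h1).ge
        | succ m ih =>
          rw [pow_succ]
          refine le_trans (Ideal.mul_mono_left ih) ?_
          rw [Ideal.span_mul_span']
          refine Ideal.span_le.2 ?_
          rintro x hx
          rw [Set.mem_mul] at hx
          obtain ⟨s, hs, t, ht, rfl⟩ := hx
          obtain ⟨a, ⟨ha1, ha2⟩, rfl⟩ := hs
          obtain ⟨i, hij, rfl⟩ := ht
          refine Ideal.subset_span ⟨a + Finsupp.single i 1, ⟨?_, ?_⟩, ?_⟩
          · intro l hl
            classical
            rcases Finset.mem_union.mp (Finsupp.support_add hl) with hl' | hl'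
            · exact ha1 l hl'
            · have := Finsupp.support_single_subset hl'
              rw [Finset.mem_singleton] at this
              exact this ▸ hij
          · simp only [Finsupp.add_apply, Finset.sum_add_distrib, ha2, sum_single]
          · have hX : (X i : MvPolynomial (Fin n) K) = monomial (Finsupp.single i 1) 1 := by
              rw [← X_pow_eq_monomial, pow_one]
            simp only [hX, monomial_mul, one_mul]
      intro h hh
      have hh2 := claim _ hh
      have hle : Ideal.span ((fun a => monomial a (1 : K)) ''
            {a : Fin n →₀ ℕ | (∀ l ∈ a.support, l ≤ j) ∧ ∑ l : Fin n, a l = n * KS + 1}) ≤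
          (Ideal.span ((fun u => monomial u (1 : K)) '' M)).colon {g} := by
        refine Ideal.span_le.2 ?_
        rintro x ⟨a, ⟨ha1, ha2⟩, rfl⟩
        rw [SetLike.mem_coe, Submodule.mem_colon_singleton, smul_eq_mul, mulmem_iff]
        intro w hw
        have hex : ∃ i : Fin n, KS < a i := by
          by_contra hno
          push_neg at hno
          have hbd : ∑ l : Fin n, a l ≤ n * KS := by
            calc ∑ l : Fin n, a l ≤ ∑ _l : Fin n, KS := Finset.sum_le_sum fun l _ => hno l
            _ = n * KS := by simp [Finset.sum_const, Finset.card_univ, mul_comm]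
          omega
        obtain ⟨i, hi⟩ := hex
        have hij : i ≤ j := ha1 i (Finsupp.mem_support_iff.2 (by omega))
        refine mem_mono (step3 i hij w hw) (add_le_add ?_ le_rfl)
        intro l
        rcases eq_or_ne l i with rfl | hne
        · simpa using hi.le
        · simp [Finsupp.single_eq_of_ne hne]
      have := hle hh2
      rwa [Submodule.mem_colon_singleton, smul_eq_mul] at this
    · rintro ⟨k, hk⟩
      exact ⟨k, hk _ (Ideal.pow_mem_pow (Ideal.subset_span (by exact ⟨j, le_refl j, rfl⟩)) k)⟩
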